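/- The cubic fourfold Y ⊂ P⁵ defined by S₀S₁S₂ = Φ(T₀,T₁,T₂), where Φ defines a nonsingular plane cubic, has singular locus exactly the three points p₀, p₁, p₂ where pᵢ is the coordinate point with only the Sᵢ-coordinate nonzero; at each pᵢ the local equation is of the form s₁s₂ = Φ(t₀,t₁,t₂), a simple elliptic singularity of type Ẽ₆. -/

import Mathlib

/-!
STATEMENT 17: The cubic fourfold Y ⊂ P⁵ defined by S₀S₁S₂ = Φ(T₀,T₁,T₂), with Φ
a nonsingular plane cubic, has singular locus exactly the three coordinate
points p₀, p₁, p₂ (only the Sᵢ-coordinate nonzero); at p₀ the local equation in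
the affine chart S₀ = 1 is s₁s₂ = Φ(t₀,t₁,t₂), a simple elliptic singularity of
type Ẽ₆.
-/

open MvPolynomial

/-- The embedding of the T-variables into the six coordinates. -/
def tVar (i : Fin 3) : Fin 6 := ⟨(i : ℕ) + 3, by omega⟩

/-- The embedding of the S-variables into the six coordinates. -/
def sVar (i : Fin 3) : Fin 6 := ⟨(i : ℕ), by omega⟩

/-- The equation F = S₀S₁S₂ − Φ(T₀,T₁,T₂) of the cubic fourfold Y. -/
noncomputable def Feq (Φ : MvPolynomial (Fin 3) ℂ) : MvPolynomial (Fin 6) ℂ :=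
  X (sVar 0) * X (sVar 1) * X (sVar 2) - rename tVar Φ

lemma tVar_inj : Function.Injective tVar := by
  intro a b h; simpa [tVar, Fin.ext_iff] using h

lemma aux_pderiv_rename_zero (p : MvPolynomial (Fin 3) ℂ) (j : Fin 6)
    (hj : ∀ i : Fin 3, j ≠ tVar i) : pderiv j (rename tVar p) = 0 := by
  apply pderiv_eq_zero_of_notMem_vars
  intro hmem
  obtain ⟨i, -, rfl⟩ := Finset.mem_image.mp (vars_rename _ _ hmem)
  exact hj i rfl

lemma aux_eval0_pderiv (Φ : MvPolynomial (Fin 3) ℂ) (hΦ : Φ.IsHomogeneous 3) (k : Fin 3) :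
    eval (0 : Fin 3 → ℂ) (pderiv k Φ) = 0 := by
  rw [eval_zero]
  rw [Φ.as_sum, map_sum, map_sum]
  apply Finset.sum_eq_zero
  intro s hs
  rw [pderiv_monomial, constantCoeff_monomial]
  split_ifs with h
  · exfalso
    have hle : s ≤ Finsupp.single k 1 := tsub_eq_zero_iff_le.mp h
    have hj : ∀ j, j ≠ k → s j = 0 := fun j hj =>
      le_antisymm (by have := hle j; simpa [Finsupp.single_apply, hj.symm] using this) (Nat.zero_le _)
    have hsk : s k ≤ 1 := by simpa using hle k
    have hseq : s = Finsupp.single k (s k) := by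
      ext j
      rcases eq_or_ne j k with rfl | hne
      · simp
      · simp [Finsupp.single_apply, hne.symm, hj j hne]
    have hdeg := hΦ (mem_support_iff.mp hs)
    rw [hseq] at hdeg
    simp [Finsupp.weight_apply, Finsupp.sum_single_index] at hdeg
    omega
  · rfl

lemma sVar_ne_tVar (a k : Fin 3) : sVar a ≠ tVar k := by
  fin_cases a <;> fin_cases k <;> decide

lemma fin6_cases (j : Fin 6) : j = sVar 0 ∨ j = sVar 1 ∨ j = sVar 2 ∨
    j = tVar 0 ∨ j = tVar 1 ∨ j = tVar 2 := by
  fin_cases j <;> simp [sVar, tVar]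

lemma pd_s0 (Φ : MvPolynomial (Fin 3) ℂ) :
    pderiv (sVar 0) (Feq Φ) = X (sVar 1) * X (sVar 2) := by
  have := aux_pderiv_rename_zero Φ (sVar 0) (fun i => sVar_ne_tVar 0 i)
  simp [Feq, pderiv_mul, this, pderiv_X_of_ne (show sVar 1 ≠ sVar 0 by decide),
    pderiv_X_of_ne (show sVar 2 ≠ sVar 0 by decide), mul_comm]

lemma pd_s1 (Φ : MvPolynomial (Fin 3) ℂ) :
    pderiv (sVar 1) (Feq Φ) = X (sVar 0) * X (sVar 2) := by
  have := aux_pderiv_rename_zero Φ (sVar 1) (fun i => sVar_ne_tVar 1 i)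
  simp [Feq, pderiv_mul, this, pderiv_X_of_ne (show sVar 0 ≠ sVar 1 by decide),
    pderiv_X_of_ne (show sVar 2 ≠ sVar 1 by decide), mul_comm]

lemma pd_s2 (Φ : MvPolynomial (Fin 3) ℂ) :
    pderiv (sVar 2) (Feq Φ) = X (sVar 0) * X (sVar 1) := by
  have := aux_pderiv_rename_zero Φ (sVar 2) (fun i => sVar_ne_tVar 2 i)
  simp [Feq, pderiv_mul, this, pderiv_X_of_ne (show sVar 0 ≠ sVar 2 by decide),
    pderiv_X_of_ne (show sVar 1 ≠ sVar 2 by decide), mul_comm]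

lemma pd_t (Φ : MvPolynomial (Fin 3) ℂ) (k : Fin 3) :
    pderiv (tVar k) (Feq Φ) = - rename tVar (pderiv k Φ) := by
  simp [Feq, pderiv_mul, pderiv_rename tVar_inj,
    pderiv_X_of_ne (sVar_ne_tVar 0 k), pderiv_X_of_ne (sVar_ne_tVar 1 k),
    pderiv_X_of_ne (sVar_ne_tVar 2 k)]

theorem stmt17 (Φ : MvPolynomial (Fin 3) ℂ)
    (hΦ : Φ.IsHomogeneous 3)
    -- Φ defines a nonsingular plane cubic:
    (hsm : ∀ t : Fin 3 → ℂ, (∀ i : Fin 3, eval t (pderiv i Φ) = 0) → t = 0) :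
    -- The singular locus of the projective fourfold Y = {F = 0}, i.e. the set of
    -- nonzero x ∈ ℂ⁶ at which all six partial derivatives of F vanish, is
    -- exactly the union of the three punctured coordinate axes through the
    -- points p₀, p₁, p₂ (only the Sᵢ-coordinate nonzero):
    ({x : Fin 6 → ℂ | x ≠ 0 ∧ ∀ j : Fin 6, eval x (pderiv j (Feq Φ)) = 0} =
      {x : Fin 6 → ℂ | ∃ i : Fin 3, x (sVar i) ≠ 0 ∧
        ∀ j : Fin 6, j ≠ sVar i → x j = 0}) ∧
    -- and in the affine chart S₀ = 1 around p₀ the equation F = 0 reads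
    -- s₁s₂ = Φ(t₀,t₁,t₂):
    (∀ s₁ s₂ : ℂ, ∀ t : Fin 3 → ℂ,
      eval (fun j : Fin 6 =>
        if j = sVar 0 then 1 else if j = sVar 1 then s₁ else if j = sVar 2 then s₂
        else t ⟨(j : ℕ) - 3, by omega⟩) (Feq Φ) = 0 ↔ s₁ * s₂ = eval t Φ) := by
  constructor
  · ext x
    simp only [Set.mem_setOf_eq]
    constructor
    · rintro ⟨hx0, hx⟩
      have hT : ∀ k : Fin 3, x (tVar k) = 0 := by
        have h := hsm (x ∘ tVar) (fun i => by
          have := hx (tVar i)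
          rw [pd_t] at this
          simpa [eval_rename] using this)
        intro k; exact congrFun h k
      have h12 : x (sVar 1) * x (sVar 2) = 0 := by simpa [pd_s0] using hx (sVar 0)
      have h02 : x (sVar 0) * x (sVar 2) = 0 := by simpa [pd_s1] using hx (sVar 1)
      have h01 : x (sVar 0) * x (sVar 1) = 0 := by simpa [pd_s2] using hx (sVar 2)
      have hne : x (sVar 0) ≠ 0 ∨ x (sVar 1) ≠ 0 ∨ x (sVar 2) ≠ 0 := by
        by_contra hc
        push_neg at hc
        apply hx0
        funext j
        rcases fin6_cases j with rfl | rfl | rfl | rfl | rfl | rfl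
        · exact hc.1
        · exact hc.2.1
        · exact hc.2.2
        all_goals apply hT
      rcases hne with h | h | h
      · refine ⟨0, h, fun j hj => ?_⟩
        rcases fin6_cases j with rfl | rfl | rfl | rfl | rfl | rfl
        · exact absurd rfl hj
        · exact (mul_eq_zero.mp h01).resolve_left h
        · exact (mul_eq_zero.mp h02).resolve_left h
        all_goals apply hT
      · refine ⟨1, h, fun j hj => ?_⟩
        rcases fin6_cases j with rfl | rfl | rfl | rfl | rfl | rfl
        · exact (mul_eq_zero.mp h01).resolve_right h
        · exact absurd rfl hj
        · exact (mul_eq_zero.mp h12).resolve_left h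
        all_goals apply hT
      · refine ⟨2, h, fun j hj => ?_⟩
        rcases fin6_cases j with rfl | rfl | rfl | rfl | rfl | rfl
        · exact (mul_eq_zero.mp h02).resolve_right h
        · exact (mul_eq_zero.mp h12).resolve_right h
        · exact absurd rfl hj
        all_goals apply hT
    · rintro ⟨i, hi, hrest⟩
      refine ⟨fun h => hi (by rw [h]; rfl), fun j => ?_⟩
      have hT0 : (x ∘ tVar) = 0 := by
        funext k; exact hrest (tVar k) (Ne.symm (sVar_ne_tVar i k))
      rcases fin6_cases j with rfl | rfl | rfl | rfl | rfl | rfl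
      · rw [pd_s0]
        fin_cases i
        · simp [hrest (sVar 1) (by decide), hrest (sVar 2) (by decide)]
        · simp [hrest (sVar 2) (by decide)]
        · simp [hrest (sVar 1) (by decide)]
      · rw [pd_s1]
        fin_cases i
        · simp [hrest (sVar 2) (by decide)]
        · simp [hrest (sVar 0) (by decide), hrest (sVar 2) (by decide)]
        · simp [hrest (sVar 0) (by decide)]
      · rw [pd_s2]
        fin_cases i
        · simp [hrest (sVar 1) (by decide)]
        · simp [hrest (sVar 0) (by decide)]
        · simp [hrest (sVar 0) (by decide), hrest (sVar 1) (by decide)]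
      all_goals
        rw [pd_t]
        simp only [map_neg, eval_rename, neg_eq_zero]
        rw [hT0]
        exact aux_eval0_pderiv Φ hΦ _
  · intro s₁ s₂ t
    have hchart : ∀ i : Fin 3, ((fun j : Fin 6 =>
        if j = sVar 0 then 1 else if j = sVar 1 then s₁ else if j = sVar 2 then s₂
        else t ⟨(j : ℕ) - 3, by omega⟩) ∘ tVar) i = t i := by
      intro i
      fin_cases i <;> simp [tVar, sVar] <;> rfl
    simp only [Feq, map_sub, map_mul, eval_X, eval_rename]
    rw [funext hchart]
    norm_num [sVar, Fin.ext_iff]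
    rw [sub_eq_zero]
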